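/- A connected graph G with at least one edge is bipartite if and only if β₀(G) = 2/3, where β₀(G) = max{α ∈ (0,1) : λ_n(B_α(G)) = 0}. -/

import Mathlib

open Matrix

/-- The adjacency matrix of `G` over `ℝ`. -/
noncomputable def adjM {V : Type*} [Fintype V] [DecidableEq V]
    (G : SimpleGraph V) [DecidableRel G.Adj] : Matrix V V ℝ :=
  G.adjMatrix ℝ

/-- The diagonal degree matrix of `G`. -/
noncomputable def degM {V : Type*} [Fintype V] [DecidableEq V]
    (G : SimpleGraph V) [DecidableRel G.Adj] : Matrix V V ℝ :=
  Matrix.diagonal fun v => (G.degree v : ℝ)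

/-- The Laplacian matrix `L(G) = D(G) - A(G)`. -/
noncomputable def lapM {V : Type*} [Fintype V] [DecidableEq V]
    (G : SimpleGraph V) [DecidableRel G.Adj] : Matrix V V ℝ :=
  degM G - adjM G

/-- The matrix `B_α(G) = α A(G) + (1-α) L(G)`. -/
noncomputable def Balpha {V : Type*} [Fintype V] [DecidableEq V]
    (G : SimpleGraph V) [DecidableRel G.Adj] (α : ℝ) : Matrix V V ℝ :=
  α • adjM G + (1 - α) • lapM G

section Helpers

set_option linter.unusedSectionVars false

variable {V : Type*} [Fintype V] [DecidableEq V]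
variable (G : SimpleGraph V) [DecidableRel G.Adj]

lemma spec_mem_iff (M : Matrix V V ℝ) (μ : ℝ) :
    μ ∈ spectrum ℝ M ↔ ∃ x, x ≠ 0 ∧ M *ᵥ x = μ • x := by
  rw [spectrum.mem_iff, Matrix.isUnit_iff_isUnit_det, isUnit_iff_ne_zero, not_ne_iff,
    ← Matrix.exists_mulVec_eq_zero_iff]
  have h2 : ∀ x : V → ℝ, (algebraMap ℝ (Matrix V V ℝ) μ) *ᵥ x = μ • x := by
    intro x
    rw [Matrix.algebraMap_eq_diagonal]
    ext i
    simp [Matrix.mulVec_diagonal]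
  constructor
  · rintro ⟨x, hx, h⟩
    rw [Matrix.sub_mulVec, h2, sub_eq_zero] at h
    exact ⟨x, hx, h.symm⟩
  · rintro ⟨x, hx, h⟩
    exact ⟨x, hx, by rw [Matrix.sub_mulVec, h2, h, sub_self]⟩

lemma spec_nonneg {M : Matrix V V ℝ} (hq : ∀ x, 0 ≤ x ⬝ᵥ (M *ᵥ x)) {μ : ℝ}
    (hμ : μ ∈ spectrum ℝ M) : 0 ≤ μ := by
  obtain ⟨x, hx, hMx⟩ := (spec_mem_iff M μ).1 hμ
  have h1 : 0 ≤ x ⬝ᵥ (μ • x) := hMx ▸ hq x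
  have h2 : x ⬝ᵥ (μ • x) = μ * (x ⬝ᵥ x) := by
    simp only [dotProduct, Pi.smul_apply, smul_eq_mul, Finset.mul_sum]
    exact Finset.sum_congr rfl fun i _ => by ring
  have h3 : 0 < x ⬝ᵥ x := by
    rcases lt_or_eq_of_le (Finset.sum_nonneg fun i _ => mul_self_nonneg (x i)) with h | h
    · exact h
    · exact absurd (dotProduct_self_eq_zero.mp h.symm) hx
  rw [h2] at h1
  nlinarith [h1, h3]

lemma sInf_spectrum_eq_zero_iff [Nonempty V] (M : Matrix V V ℝ) (hM : M.IsHermitian)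
    (hq : ∀ x, 0 ≤ x ⬝ᵥ (M *ᵥ x)) :
    sInf (spectrum ℝ M) = 0 ↔ ∃ x, x ≠ 0 ∧ M *ᵥ x = 0 := by
  have hbdd : BddBelow (spectrum ℝ M) := ⟨0, fun μ hμ => spec_nonneg hq hμ⟩
  constructor
  · intro h
    have hne : (spectrum ℝ M).Nonempty :=
      ⟨hM.eigenvalues (Classical.arbitrary V), hM.eigenvalues_mem_spectrum_real _⟩
    have hmem : sInf (spectrum ℝ M) ∈ spectrum ℝ M := hne.csInf_mem (Matrix.finite_spectrum M)
    rw [h] at hmem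
    obtain ⟨x, hx, hMx⟩ := (spec_mem_iff M 0).1 hmem
    exact ⟨x, hx, by simpa using hMx⟩
  · rintro ⟨x, hx, hMx⟩
    have h0 : (0:ℝ) ∈ spectrum ℝ M := (spec_mem_iff M 0).2 ⟨x, hx, by simp [hMx]⟩
    exact le_antisymm (csInf_le hbdd h0) (le_csInf ⟨0, h0⟩ fun μ hμ => spec_nonneg hq hμ)

lemma sInf_spectrum_neg {M : Matrix V V ℝ} (hM : M.IsHermitian) {x : V → ℝ}
    (hx : x ⬝ᵥ (M *ᵥ x) < 0) : sInf (spectrum ℝ M) < 0 := by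
  have hneg : ∃ i, hM.eigenvalues i < 0 := by
    by_contra h
    push_neg at h
    have hpsd := hM.posSemidef_iff_eigenvalues_nonneg.mpr (fun i => h i)
    have h2 := hpsd.dotProduct_mulVec_nonneg x
    rw [star_trivial] at h2
    exact absurd hx (not_lt.mpr h2)
  obtain ⟨i, hi⟩ := hneg
  exact lt_of_le_of_lt
    (csInf_le (Matrix.finite_spectrum M).bddBelow (hM.eigenvalues_mem_spectrum_real i)) hi

lemma Balpha_eq (α : ℝ) : Balpha G α = (1-α) • degM G + (2*α-1) • adjM G := by
  unfold Balpha lapM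
  module

lemma Balpha_isHermitian (α : ℝ) : (Balpha G α).IsHermitian := by
  rw [Balpha_eq]
  unfold Matrix.IsHermitian
  ext i j
  simp only [conjTranspose_apply, Matrix.add_apply, Matrix.smul_apply, degM, adjM,
    Matrix.diagonal_apply, SimpleGraph.adjMatrix_apply, star_trivial, smul_eq_mul]
  by_cases h : i = j
  · subst h; simp
  · rw [if_neg h, if_neg (Ne.symm h)]
    simp only [G.adj_comm j i]

lemma degree_eq_sum (u : V) : (G.degree u : ℝ) = ∑ v, if G.Adj u v then (1:ℝ) else 0 := by
  rw [Finset.sum_boole]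
  norm_num [SimpleGraph.degree, SimpleGraph.neighborFinset_eq_filter]

lemma quadForm (α : ℝ) (x : V → ℝ) :
    x ⬝ᵥ (Balpha G α *ᵥ x) =
      ∑ u, ∑ v, (if G.Adj u v then
        (α/4)*(x u + x v)^2 + ((2-3*α)/4)*(x u - x v)^2 else 0) := by
  have key : ∀ u v, x u * ((Balpha G α) u v * x v) =
      ((1-α)/2) * ((if u = v then (G.degree u : ℝ) else 0) * (x u ^2 + x v ^2))
      + (2*α-1) * (if G.Adj u v then x u * x v else 0) := by
    intro u v
    rw [Balpha_eq]
    simp only [Matrix.add_apply, Matrix.smul_apply, degM, adjM, Matrix.diagonal_apply,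
      SimpleGraph.adjMatrix_apply, smul_eq_mul]
    by_cases h : u = v
    · subst h; simp [G.irrefl]; ring
    · rw [if_neg h]; split_ifs <;> ring
  have expand : x ⬝ᵥ (Balpha G α *ᵥ x) = ∑ u, ∑ v, x u * ((Balpha G α) u v * x v) := by
    simp [dotProduct, mulVec, Finset.mul_sum]
  have δsum : ∀ u : V,
      (∑ v, ((1-α)/2) * ((if u = v then (G.degree u:ℝ) else 0) * (x u^2 + x v^2)))
        = (1-α) * ((G.degree u:ℝ) * x u^2) := by
    intro u
    rw [Finset.sum_eq_single u]
    · simp; ring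
    · intro b _ hb
      rw [if_neg fun h => hb h.symm]; simp
    · intro h; exact absurd (Finset.mem_univ u) h
  have E2 : ∀ u : V, (G.degree u : ℝ) * x u^2 = ∑ v, (if G.Adj u v then x u^2 else 0) := by
    intro u
    rw [degree_eq_sum, Finset.sum_mul]
    simp [ite_mul]
  set S : ℝ := ∑ u, ∑ v, (if G.Adj u v then x u^2 else 0) with hS
  set S' : ℝ := ∑ u, ∑ v, (if G.Adj u v then x v^2 else 0) with hS'
  set T : ℝ := ∑ u, ∑ v, (if G.Adj u v then x u * x v else 0) with hT
  have swap : S = S' := by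
    rw [hS, hS', Finset.sum_comm]
    refine Finset.sum_congr rfl fun a _ => Finset.sum_congr rfl fun b _ => ?_
    exact if_congr (G.adj_comm b a) rfl rfl
  have E1 : x ⬝ᵥ (Balpha G α *ᵥ x) = (1-α) * S + (2*α-1) * T := by
    rw [expand]
    calc ∑ u, ∑ v, x u * ((Balpha G α) u v * x v)
        = ∑ u, ∑ v, (((1-α)/2) * ((if u = v then (G.degree u : ℝ) else 0) * (x u ^2 + x v ^2))
            + (2*α-1) * (if G.Adj u v then x u * x v else 0)) := by
          exact Finset.sum_congr rfl fun u _ => Finset.sum_congr rfl fun v _ => key u v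
      _ = ∑ u, ((∑ v, ((1-α)/2) * ((if u = v then (G.degree u : ℝ) else 0) * (x u ^2 + x v ^2)))
            + ∑ v, (2*α-1) * (if G.Adj u v then x u * x v else 0)) := by
          exact Finset.sum_congr rfl fun u _ => Finset.sum_add_distrib
      _ = (∑ u, (1-α) * ((G.degree u:ℝ) * x u^2)) + (2*α-1) * T := by
          rw [Finset.sum_add_distrib]
          congr 1
          · exact Finset.sum_congr rfl fun u _ => δsum u
          · rw [hT, Finset.mul_sum]
            exact Finset.sum_congr rfl fun u _ => (Finset.mul_sum _ _ _).symm
      _ = (1-α) * S + (2*α-1) * T := by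
          have : (∑ u, (1-α) * ((G.degree u:ℝ) * x u^2))
              = ∑ u, (1-α) * ∑ v, (if G.Adj u v then x u^2 else 0) :=
            Finset.sum_congr rfl fun u _ => by rw [E2 u]
          rw [this, hS]
          simp [Finset.mul_sum]
  have E3 : (∑ u, ∑ v, (if G.Adj u v then
        (α/4)*(x u + x v)^2 + ((2-3*α)/4)*(x u - x v)^2 else 0))
      = (1-α)/2 * S + (1-α)/2 * S' + (2*α-1) * T := by
    rw [hS, hS', hT, Finset.mul_sum, Finset.mul_sum, Finset.mul_sum, ← Finset.sum_add_distrib,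
      ← Finset.sum_add_distrib]
    refine Finset.sum_congr rfl fun u _ => ?_
    rw [Finset.mul_sum, Finset.mul_sum, Finset.mul_sum, ← Finset.sum_add_distrib,
      ← Finset.sum_add_distrib]
    refine Finset.sum_congr rfl fun v _ => ?_
    split_ifs <;> ring
  rw [E1, E3]
  linear_combination ((1-α)/2) * swap

/-- Quadratic form of `Balpha` is nonnegative when `0 ≤ α ≤ 2/3`. -/
lemma quad_nonneg {α : ℝ} (hα0 : 0 ≤ α) (hα1 : α ≤ 2/3) (x : V → ℝ) :
    0 ≤ x ⬝ᵥ (Balpha G α *ᵥ x) := by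
  rw [quadForm]
  refine Finset.sum_nonneg fun u _ => Finset.sum_nonneg fun v _ => ?_
  split_ifs
  · have h1 : 0 ≤ α/4 := by linarith
    have h2 : 0 ≤ (2-3*α)/4 := by linarith
    positivity
  · exact le_refl 0

lemma exists_adj (hconn : G.Connected) (hedge : ∃ e, e ∈ G.edgeSet) (v : V) :
    ∃ w, G.Adj v w := by
  obtain ⟨e, he⟩ := hedge
  induction e using Sym2.ind with
  | _ a b =>
    rw [SimpleGraph.mem_edgeSet] at he
    obtain ⟨p⟩ := hconn.preconnected v a
    cases p with
    | nil => exact ⟨b, he⟩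
    | cons h q => exact ⟨_, h⟩

lemma walk_const {f : V → ℝ} (h : ∀ u v, G.Adj u v → f u = f v) {u v : V}
    (p : G.Walk u v) : f u = f v := by
  induction p with
  | nil => rfl
  | cons ha _ ih => exact (h _ _ ha).trans ih

lemma kernel_small (hconn : G.Connected) (hedge : ∃ e, e ∈ G.edgeSet) {α : ℝ}
    (hα0 : 0 < α) (hα1 : α < 2/3) {x : V → ℝ} (hx0 : x ≠ 0)
    (hker : Balpha G α *ᵥ x = 0) : False := by
  have hq : x ⬝ᵥ (Balpha G α *ᵥ x) = 0 := by rw [hker]; simp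
  rw [quadForm] at hq
  have tnn : ∀ u v : V, 0 ≤ (if G.Adj u v then
      (α/4)*(x u + x v)^2 + ((2-3*α)/4)*(x u - x v)^2 else 0) := by
    intro u v
    split_ifs
    · have h1 : 0 ≤ α/4 := by linarith
      have h2 : 0 ≤ (2-3*α)/4 := by linarith
      positivity
    · exact le_refl 0
  have h1 := (Finset.sum_eq_zero_iff_of_nonneg
    (fun u _ => Finset.sum_nonneg fun v _ => tnn u v)).mp hq
  have hzero : ∀ u v, G.Adj u v → x u = 0 := by
    intro u v huv
    have h2 := (Finset.sum_eq_zero_iff_of_nonneg (fun v _ => tnn u v)).mp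
      (h1 u (Finset.mem_univ u)) v (Finset.mem_univ v)
    rw [if_pos huv] at h2
    have hs : (x u + x v)^2 = 0 := by nlinarith [sq_nonneg (x u + x v), sq_nonneg (x u - x v)]
    have hd : (x u - x v)^2 = 0 := by nlinarith [sq_nonneg (x u + x v), sq_nonneg (x u - x v)]
    have hs' : x u + x v = 0 := by
      have := sq_eq_zero_iff.mp hs; linarith [this]
    have hd' : x u - x v = 0 := by
      have := sq_eq_zero_iff.mp hd; linarith [this]
    linarith
  apply hx0
  funext v
  obtain ⟨w, hw⟩ := exists_adj G hconn hedge v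
  exact hzero v w hw

lemma kernel_23_colorable (hconn : G.Connected) {x : V → ℝ} (hx0 : x ≠ 0)
    (hker : Balpha G (2/3) *ᵥ x = 0) : G.Colorable 2 := by
  have hq : x ⬝ᵥ (Balpha G (2/3) *ᵥ x) = 0 := by rw [hker]; simp
  rw [quadForm] at hq
  have tnn : ∀ u v : V, 0 ≤ (if G.Adj u v then
      ((2:ℝ)/3/4)*(x u + x v)^2 + ((2-3*(2/3))/4)*(x u - x v)^2 else 0) := by
    intro u v
    split_ifs
    · positivity
    · exact le_refl 0
  have h1 := (Finset.sum_eq_zero_iff_of_nonneg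
    (fun u _ => Finset.sum_nonneg fun v _ => tnn u v)).mp hq
  have hopp : ∀ u v, G.Adj u v → x u = - x v := by
    intro u v huv
    have h2 := (Finset.sum_eq_zero_iff_of_nonneg (fun v _ => tnn u v)).mp
      (h1 u (Finset.mem_univ u)) v (Finset.mem_univ v)
    rw [if_pos huv] at h2
    have hs : (x u + x v)^2 = 0 := by nlinarith [sq_nonneg (x u + x v), sq_nonneg (x u - x v)]
    have := sq_eq_zero_iff.mp hs
    linarith [this]
  obtain ⟨v0, hv0⟩ := Function.ne_iff.mp hx0
  have hv0' : x v0 ≠ 0 := by simpa using hv0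
  have habs : ∀ u v, G.Adj u v → |x u| = |x v| := by
    intro u v h
    rw [hopp u v h, abs_neg]
  have hnz : ∀ v, x v ≠ 0 := by
    intro v
    obtain ⟨p⟩ := hconn.preconnected v v0
    have := walk_const G habs p
    intro hc
    rw [hc, abs_zero] at this
    exact hv0' (abs_eq_zero.mp this.symm)
  refine ⟨SimpleGraph.Coloring.mk (fun v => if 0 < x v then (0 : Fin 2) else 1) ?_⟩
  intro u v huv
  have h1 := hopp u v huv
  by_cases hu : 0 < x u
  · have hv : ¬ 0 < x v := by
      intro hv; linarith
    simp [hu, hv]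
  · have hxu : x u < 0 := lt_of_le_of_ne (not_lt.mp hu) (hnz u)
    have hv : 0 < x v := by linarith
    simp [hu, hv]

end Helpers

theorem stmt_17 {V : Type*} [Fintype V] [DecidableEq V]
    (G : SimpleGraph V) [DecidableRel G.Adj]
    (hconn : G.Connected) (hedge : ∃ e, e ∈ G.edgeSet) :
    G.Colorable 2 ↔
      sSup {α : ℝ | α ∈ Set.Ioo (0:ℝ) 1 ∧
        sInf (spectrum ℝ (Balpha G α)) = 0} = 2/3 := by
  classical
  obtain ⟨e0, he0⟩ := hedge
  obtain ⟨a, b, hab⟩ : ∃ a b, G.Adj a b := by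
    revert he0
    induction e0 using Sym2.ind with
    | _ a b => exact fun he0 => ⟨a, b, G.mem_edgeSet.mp he0⟩
  have hne : Nonempty V := ⟨a⟩
  set S := {α : ℝ | α ∈ Set.Ioo (0:ℝ) 1 ∧ sInf (spectrum ℝ (Balpha G α)) = 0} with hSdef
  have hedge' : ∃ e, e ∈ G.edgeSet := ⟨e0, he0⟩
  constructor
  · intro hcol
    obtain ⟨C⟩ := hcol
    set y : V → ℝ := fun v => if C v = 0 then 1 else -1 with hy
    have hysq : ∀ v, y v ^ 2 = 1 := by
      intro v; rw [hy]; dsimp only; split_ifs <;> norm_num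
    have hyne : y ≠ 0 := by
      intro h
      have h2 := congrFun h a
      rw [hy] at h2; dsimp only at h2
      split_ifs at h2 <;> norm_num at h2
    have hyopp : ∀ u v, G.Adj u v → y u = - y v := by
      intro u v h
      have hnec := C.valid h
      have fin2 : ∀ c : Fin 2, c ≠ 0 → c = 1 := by decide
      rw [hy]; dsimp only
      by_cases h0 : C u = 0
      · have h1 : ¬ C v = 0 := fun e => hnec (by rw [h0, e])
        simp [h0, h1]
      · by_cases h1 : C v = 0
        · simp [h0, h1]
        · exact absurd ((fin2 _ h0).trans (fin2 _ h1).symm) hnec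
    have hmem : (2/3 : ℝ) ∈ S := by
      refine ⟨⟨by norm_num, by norm_num⟩, ?_⟩
      rw [sInf_spectrum_eq_zero_iff _ (Balpha_isHermitian G _)
        (quad_nonneg G (by norm_num) (by norm_num))]
      refine ⟨y, hyne, ?_⟩
      have hpsd : (Balpha G (2/3)).PosSemidef :=
        Matrix.PosSemidef.of_dotProduct_mulVec_nonneg (Balpha_isHermitian G _) fun z => by
          rw [star_trivial]; exact quad_nonneg G (by norm_num) (by norm_num) z
      apply (hpsd.dotProduct_mulVec_zero_iff y).mp
      rw [star_trivial, quadForm]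
      refine Finset.sum_eq_zero fun u _ => Finset.sum_eq_zero fun v _ => ?_
      split_ifs with h
      · rw [hyopp u v h]; ring
      · rfl
    have hSeq : S = {(2/3 : ℝ)} := by
      apply Set.eq_singleton_iff_unique_mem.mpr
      refine ⟨hmem, ?_⟩
      rintro α ⟨⟨hα0, hα1⟩, hsInf⟩
      rcases lt_trichotomy α (2/3) with hlt | heq | hgt
      · exfalso
        rw [sInf_spectrum_eq_zero_iff _ (Balpha_isHermitian G _)
          (quad_nonneg G hα0.le hlt.le)] at hsInf
        obtain ⟨x, hx0, hker⟩ := hsInf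
        exact kernel_small G hconn hedge' hα0 hlt hx0 hker
      · exact heq
      · exfalso
        have hneg : y ⬝ᵥ (Balpha G α *ᵥ y) < 0 := by
          rw [quadForm]
          have tnp : ∀ u v : V, (if G.Adj u v then
              (α/4)*(y u + y v)^2 + ((2-3*α)/4)*(y u - y v)^2 else 0) ≤ 0 := by
            intro u v
            split_ifs with h
            · rw [hyopp u v h]
              nlinarith [sq_nonneg (- y v - y v)]
            · exact le_refl 0
          have hstrict : (∑ v, if G.Adj a v then
              (α/4)*(y a + y v)^2 + ((2-3*α)/4)*(y a - y v)^2 else 0) < 0 := by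
            have hb : (if G.Adj a b then
                (α/4)*(y a + y b)^2 + ((2-3*α)/4)*(y a - y b)^2 else 0) < 0 := by
              rw [if_pos hab, hyopp a b hab]
              nlinarith [hysq b]
            calc (∑ v, if G.Adj a v then
                  (α/4)*(y a + y v)^2 + ((2-3*α)/4)*(y a - y v)^2 else 0)
                < ∑ _v : V, (0:ℝ) :=
                  Finset.sum_lt_sum (fun v _ => tnp a v) ⟨b, Finset.mem_univ b, hb⟩
              _ = 0 := by simp
          calc (∑ u, ∑ v, if G.Adj u v then
                (α/4)*(y u + y v)^2 + ((2-3*α)/4)*(y u - y v)^2 else 0)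
              < ∑ _u : V, (0:ℝ) :=
                Finset.sum_lt_sum
                  (fun u _ => Finset.sum_nonpos fun v _ => tnp u v)
                  ⟨a, Finset.mem_univ a, hstrict⟩
            _ = 0 := by simp
        have hlt0 := sInf_spectrum_neg (Balpha_isHermitian G α) hneg
        rw [hsInf] at hlt0
        exact lt_irrefl 0 hlt0
    rw [hSeq]
    exact csSup_singleton _
  · intro hsup
    by_contra hncol
    have h23 : ∀ α ∈ S, 2/3 < α := by
      rintro α ⟨⟨hα0, hα1⟩, hsInf⟩
      by_contra hle
      push_neg at hle
      rcases lt_or_eq_of_le hle with hlt | heq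
      · rw [sInf_spectrum_eq_zero_iff _ (Balpha_isHermitian G _)
          (quad_nonneg G hα0.le hlt.le)] at hsInf
        obtain ⟨x, hx0, hker⟩ := hsInf
        exact kernel_small G hconn hedge' hα0 hlt hx0 hker
      · rw [heq] at hsInf
        rw [sInf_spectrum_eq_zero_iff _ (Balpha_isHermitian G _)
          (quad_nonneg G (by norm_num) (by norm_num))] at hsInf
        obtain ⟨x, hx0, hker⟩ := hsInf
        exact hncol (kernel_23_colorable G hconn hx0 hker)
    rcases Set.eq_empty_or_nonempty S with hemp | ⟨α, hα⟩
    · rw [hemp, Real.sSup_empty] at hsup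
      norm_num at hsup
    · have hbdd : BddAbove S := ⟨1, fun β hβ => le_of_lt hβ.1.2⟩
      have hle := le_csSup hbdd hα
      have h := h23 α hα
      rw [hsup] at hle
      linarith
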